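/- Let P be a finite projective plane of order q, let P₀ be a point and let L be a set of lines such that every point other than P₀ lies on some line of L and P₀ lies on no line of L. Suppose every point lies on at most ⌊√q⌋ + 2 lines of L, all values x_i for 4 ≤ i ≤ ⌊√q⌋ vanish and x_3 = 0, where x_i counts points on exactly i lines of L. Then every line through P₀ contains at most one point lying on ⌊√q⌋ + 1 or more lines of L. -/

import Mathlib

open Finset

section Aux

variable {P L : Type*} [Membership P L] [Configuration.ProjectivePlane P L]
    [Fintype P] [Fintype L] [∀ (p : P) (l : L), Decidable (p ∈ l)]

/-- Each line of `ℒ` (which avoids `P₀`) meets a line through `P₀` in exactly one point,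
so the degrees along such a line sum to `ℒ.card`. -/
lemma aux_sum (P₀ : P) (ℒ : Finset L) (hP₀ : ∀ m ∈ ℒ, P₀ ∉ m) (l : L) (hl : P₀ ∈ l) :
    ∑ p ∈ univ.filter (· ∈ l), (ℒ.filter (fun m => p ∈ m)).card = ℒ.card := by
  classical
  have key : ∀ m ∈ ℒ, ((univ.filter (· ∈ l)).filter (fun p => p ∈ m)).card = 1 := by
    intro m hm
    have hne : l ≠ m := fun h => hP₀ m hm (h ▸ hl)
    obtain ⟨a, ⟨hal, ham⟩, hu⟩ := Configuration.HasPoints.existsUnique_point P L l m hne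
    rw [Finset.card_eq_one]
    refine ⟨a, ?_⟩
    ext p
    simp only [Finset.mem_filter, Finset.mem_univ, true_and, Finset.mem_singleton]
    constructor
    · rintro ⟨h1, h2⟩; exact hu p ⟨h1, h2⟩
    · rintro rfl; exact ⟨hal, ham⟩
  calc ∑ p ∈ univ.filter (· ∈ l), (ℒ.filter (fun m => p ∈ m)).card
      = ∑ p ∈ univ.filter (· ∈ l), ∑ m ∈ ℒ, if p ∈ m then 1 else 0 := by
        refine Finset.sum_congr rfl fun p _ => ?_
        rw [Finset.card_filter]
    _ = ∑ m ∈ ℒ, ∑ p ∈ univ.filter (· ∈ l), if p ∈ m then 1 else 0 := Finset.sum_comm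
    _ = ∑ m ∈ ℒ, ((univ.filter (· ∈ l)).filter (fun p => p ∈ m)).card := by
        refine Finset.sum_congr rfl fun m _ => ?_
        rw [Finset.card_filter]
    _ = ∑ m ∈ ℒ, 1 := Finset.sum_congr rfl key
    _ = ℒ.card := by simp

lemma aux_card_line (q : ℕ) (hq : Configuration.ProjectivePlane.order P L = q) (l : L) :
    (univ.filter (· ∈ l)).card = q + 1 := by
  classical
  have := Configuration.ProjectivePlane.pointCount_eq P l
  rwa [Configuration.pointCount, Nat.card_eq_fintype_card, Fintype.card_subtype, hq] at this

end Aux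

theorem stmt16 {P L : Type*} [Membership P L] [Configuration.ProjectivePlane P L]
    [Fintype P] [Fintype L] [∀ (p : P) (l : L), Decidable (p ∈ l)]
    (q : ℕ) (hq : Configuration.ProjectivePlane.order P L = q)
    (P₀ : P) (ℒ : Finset L)
    (hcov : ∀ p : P, p ≠ P₀ → ∃ l ∈ ℒ, p ∈ l)
    (hP₀ : ∀ l ∈ ℒ, P₀ ∉ l)
    (hcard : ℒ.card = q + Nat.sqrt q + 2)
    (hmax : ∀ p : P, ({l ∈ ℒ | p ∈ l}).card ≤ Nat.sqrt q + 2)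
    (hmid : ∀ i, 4 ≤ i → i ≤ Nat.sqrt q →
      ({p : P | ({l ∈ ℒ | p ∈ l}).card = i} : Finset P).card = 0)
    (h3 : ({p : P | ({l ∈ ℒ | p ∈ l}).card = 3} : Finset P).card = 0) :
    ∀ l : L, P₀ ∈ l → ∀ p₁ p₂ : P, p₁ ∈ l → p₂ ∈ l →
      Nat.sqrt q + 1 ≤ ({m ∈ ℒ | p₁ ∈ m}).card →
      Nat.sqrt q + 1 ≤ ({m ∈ ℒ | p₂ ∈ m}).card → p₁ = p₂ := by
  classical
  intro l hl p₁ p₂ h1l h2l hd1 hd2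
  by_contra hne
  set s := Nat.sqrt q with hs
  set D : P → ℕ := fun p => (ℒ.filter (fun m => p ∈ m)).card with hD
  -- basic facts
  have hq2 : 2 ≤ q := by
    have h := Configuration.ProjectivePlane.one_lt_order P L
    rw [hq] at h; omega
  have hs0 : 1 ≤ s := by
    rw [hs]
    exact Nat.le_sqrt.mpr (by omega)
  have hD0 : D P₀ = 0 := by
    simp only [hD, Finset.card_eq_zero]
    exact Finset.filter_eq_empty_iff.mpr fun {m} hm => hP₀ m hm
  have hD1 : ∀ p : P, p ≠ P₀ → 1 ≤ D p := by
    intro p hp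
    obtain ⟨m, hm, hpm⟩ := hcov p hp
    exact Finset.card_pos.mpr ⟨m, Finset.mem_filter.mpr ⟨hm, hpm⟩⟩
  have hne3 : ∀ p : P, D p ≠ 3 := by
    intro p hp
    have h0 := Finset.card_eq_zero.mp h3
    have hp' : p ∈ ({p : P | ({l ∈ ℒ | p ∈ l}).card = 3} : Finset P) := by
      simpa using hp
    rw [h0] at hp'
    exact absurd hp' (Finset.notMem_empty p)
  have hDmax : ∀ p : P, D p ≤ s + 2 := hmax
  -- sum of degrees over the non-P₀ points of a line through P₀
  have hsum : ∀ l' : L, P₀ ∈ l' →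
      ∑ p ∈ (univ.filter (· ∈ l')).erase P₀, D p = q + s + 2 := by
    intro l' hl'
    have h1 := aux_sum P₀ ℒ hP₀ l' hl'
    have hPmem : P₀ ∈ univ.filter (· ∈ l') := by simp [hl']
    rw [← Finset.add_sum_erase _ _ hPmem] at h1
    rw [hcard] at h1
    have : D P₀ + ∑ p ∈ (univ.filter (· ∈ l')).erase P₀, D p = q + s + 2 := h1
    omega
  have hcardB : ∀ l' : L, P₀ ∈ l' → ((univ.filter (· ∈ l')).erase P₀).card = q := by
    intro l' hl'
    rw [Finset.card_erase_of_mem (by simp [hl'] : P₀ ∈ univ.filter (· ∈ l')),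
      aux_card_line q hq l']
    omega
  -- the main count along l
  have hd1' : s + 1 ≤ D p₁ := hd1
  have hd2' : s + 1 ≤ D p₂ := hd2
  have hp1ne : p₁ ≠ P₀ := fun h => by rw [h, hD0] at hd1'; omega
  have hp2ne : p₂ ≠ P₀ := fun h => by rw [h, hD0] at hd2'; omega
  set B : Finset P := (univ.filter (· ∈ l)).erase P₀ with hB
  have hBsum : ∑ p ∈ B, D p = q + s + 2 := hsum l hl
  have hp1B : p₁ ∈ B := Finset.mem_erase.mpr ⟨hp1ne, by simp [h1l]⟩
  have hp2B : p₂ ∈ (B.erase p₁) :=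
    Finset.mem_erase.mpr ⟨fun h => hne h.symm, Finset.mem_erase.mpr ⟨hp2ne, by simp [h2l]⟩⟩
  set T : Finset P := (B.erase p₁).erase p₂ with hT
  have hTcard : T.card = q - 2 := by
    rw [hT, Finset.card_erase_of_mem hp2B, Finset.card_erase_of_mem hp1B]
    rw [hB, hcardB l hl]
    omega
  have hsplit : D p₁ + (D p₂ + ∑ p ∈ T, D p) = q + s + 2 := by
    rw [hT, ← hBsum, ← Finset.add_sum_erase _ _ hp1B, ← Finset.add_sum_erase _ _ hp2B]
  have htail : q - 2 ≤ ∑ p ∈ T, D p := by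
    calc q - 2 = ∑ _p ∈ T, 1 := by rw [Finset.sum_const, hTcard, smul_eq_mul, mul_one]
    _ ≤ ∑ p ∈ T, D p := by
        refine Finset.sum_le_sum fun p hp => hD1 p ?_
        have := Finset.mem_of_mem_erase (Finset.mem_of_mem_erase hp)
        exact (Finset.mem_erase.mp this).1
  -- from the count: s ≤ 1 (using h3 to rule out s = 2)
  have hmax1 := hDmax p₁
  have hmax2 := hDmax p₂
  have hne31 := hne3 p₁
  have hne32 := hne3 p₂
  have hs1 : s ≤ 1 := by omega
  -- hence q = 3 and s = 1
  have hDle2 : ∀ p : P, D p ≤ 2 := by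
    intro p
    have := hDmax p
    have := hne3 p
    omega
  have hBle : ∑ p ∈ B, D p ≤ 2 * q := by
    calc ∑ p ∈ B, D p ≤ ∑ _p ∈ B, 2 := Finset.sum_le_sum fun p _ => hDle2 p
    _ = 2 * q := by rw [Finset.sum_const, hB, hcardB l hl, smul_eq_mul, mul_comm]
  have hq4 : q < 4 := by
    by_contra h
    push_neg at h
    have h2 : 2 ≤ Nat.sqrt q := Nat.le_sqrt.mpr (by omega)
    omega
  have hq3 : q = 3 := by omega
  -- every point other than P₀ has degree exactly 2
  have hall2 : ∀ p : P, p ≠ P₀ → D p = 2 := by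
    intro p hp
    set l'' : L := Configuration.HasLines.mkLine (L := L) hp with hl''
    have hax := Configuration.HasLines.mkLine_ax (L := L) hp
    have hsum'' := hsum l'' hax.2
    have hcard'' := hcardB l'' hax.2
    by_contra hDp
    have hDp2 : D p < 2 := by have := hDle2 p; omega
    have hpmem : p ∈ (univ.filter (· ∈ l'')).erase P₀ :=
      Finset.mem_erase.mpr ⟨hp, by simp [hl'', hax.1]⟩
    have hlt : ∑ x ∈ (univ.filter (· ∈ l'')).erase P₀, D x <
        ∑ _x ∈ (univ.filter (· ∈ l'')).erase P₀, 2 :=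
      Finset.sum_lt_sum (fun x _ => hDle2 x) ⟨p, hpmem, hDp2⟩
    rw [Finset.sum_const, hcard'', smul_eq_mul] at hlt
    omega
  -- double counting pairs of distinct lines of ℒ
  have hoff : ℒ.offDiag =
      (univ.filter (· ≠ P₀)).biUnion (fun p => (ℒ.filter (fun m => p ∈ m)).offDiag) := by
    ext ⟨m, m'⟩
    simp only [Finset.mem_offDiag, Finset.mem_biUnion, Finset.mem_filter, Finset.mem_univ,
      true_and]
    constructor
    · rintro ⟨hm, hm', hmm⟩
      obtain ⟨a, ⟨ham, ham'⟩, -⟩ := Configuration.HasPoints.existsUnique_point P L m m' hmm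
      exact ⟨a, fun h => hP₀ m hm (h ▸ ham),
        ⟨⟨hm, ham⟩, ⟨hm', ham'⟩, hmm⟩⟩
    · rintro ⟨p, -, ⟨hm, -⟩, ⟨hm', -⟩, hmm⟩
      exact ⟨hm, hm', hmm⟩
  have hdisj : ∀ p ∈ univ.filter (· ≠ P₀), ∀ p' ∈ univ.filter (· ≠ P₀), p ≠ p' →
      Disjoint ((ℒ.filter (fun m => p ∈ m)).offDiag) ((ℒ.filter (fun m => p' ∈ m)).offDiag) := by
    intro p _ p' _ hpp'
    rw [Finset.disjoint_left]
    rintro ⟨m, m'⟩ h1 h2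
    simp only [Finset.mem_offDiag, Finset.mem_filter] at h1 h2
    obtain ⟨⟨-, hpm⟩, ⟨-, hpm'⟩, hmm⟩ := h1
    obtain ⟨⟨-, hp'm⟩, ⟨-, hp'm'⟩, -⟩ := h2
    exact (Configuration.Nondegenerate.eq_or_eq hpm hp'm hpm' hp'm').elim hpp' hmm
  have hcardoff : ℒ.offDiag.card = 30 := by
    rw [Finset.offDiag_card, hcard, hq3]
    have hseq : s = 1 := by omega
    rw [hseq]
  have hcardP : Fintype.card P = 13 := by
    rw [Configuration.ProjectivePlane.card_points P L, hq, hq3]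
    norm_num
  have hcardne : (univ.filter (· ≠ P₀) : Finset P).card = 12 := by
    rw [Finset.filter_ne', Finset.card_erase_of_mem (Finset.mem_univ _), Finset.card_univ, hcardP]
  have hsum24 : ((univ.filter (· ≠ P₀)).biUnion
      (fun p => (ℒ.filter (fun m => p ∈ m)).offDiag)).card = 24 := by
    rw [Finset.card_biUnion hdisj]
    have : ∀ p ∈ univ.filter (· ≠ P₀), ((ℒ.filter (fun m => p ∈ m)).offDiag).card = 2 := by
      intro p hp
      have hp' : p ≠ P₀ := (Finset.mem_filter.mp hp).2
      rw [Finset.offDiag_card]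
      have h2 := hall2 p hp'
      simp only [hD] at h2
      rw [h2]
    rw [Finset.sum_congr rfl this, Finset.sum_const, hcardne, smul_eq_mul]
  rw [hoff, hsum24] at hcardoff
  exact absurd hcardoff (by norm_num)
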